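/- Let d ≥ 1 and let Λ₁, Λ₂ be invertible lower-triangular real d×d matrices whose (1,1) entries satisfy 0 < (Λ₁)₁₁ < (Λ₂)₁₁. If the matrix T = Λ₁Λ₂⁻¹ is a contraction with respect to the Euclidean operator norm, then |(Λ₁)ᵢᵢ| ≤ |(Λ₂)ᵢᵢ| for every index i; consequently, for every index i ≥ 2 the instantaneous Poisson's ratio ν₁ᵢ = −[(|(Λ₂)ᵢᵢ| − |(Λ₁)ᵢᵢ|)/|(Λ₁)ᵢᵢ|] / [((Λ₂)₁₁ − (Λ₁)₁₁)/(Λ₁)₁₁] is nonpositive. -/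

import Mathlib

/-- Forward direction of Proposition 3.1: if `Λ₁, Λ₂` are invertible
lower-triangular real `d × d` matrices with `0 < (Λ₁)₁₁ < (Λ₂)₁₁` and the linear operator
`T = Λ₁ Λ₂⁻¹` is a contraction in the Euclidean operator norm, then `|(Λ₁)ᵢᵢ| ≤ |(Λ₂)ᵢᵢ|`
for every `i`, and hence the instantaneous Poisson's ratio `ν₁ᵢ` is nonpositive for `i ≥ 2`. -/
theorem stmt_0 (d : ℕ) (hd : 1 ≤ d) (Λ₁ Λ₂ : Matrix (Fin d) (Fin d) ℝ)
    (hlow₁ : ∀ i j : Fin d, i < j → Λ₁ i j = 0)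
    (hlow₂ : ∀ i j : Fin d, i < j → Λ₂ i j = 0)
    (hinv₁ : IsUnit Λ₁.det) (hinv₂ : IsUnit Λ₂.det)
    (hpos : 0 < Λ₁ ⟨0, hd⟩ ⟨0, hd⟩)
    (hlt : Λ₁ ⟨0, hd⟩ ⟨0, hd⟩ < Λ₂ ⟨0, hd⟩ ⟨0, hd⟩)
    (hcontr : ‖Matrix.toEuclideanCLM (𝕜 := ℝ) (Λ₁ * Λ₂⁻¹)‖ ≤ 1) :
    (∀ i : Fin d, |Λ₁ i i| ≤ |Λ₂ i i|) ∧
    ∀ i : Fin d, i ≠ ⟨0, hd⟩ →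
      -((|Λ₂ i i| - |Λ₁ i i|) / |Λ₁ i i|) /
        ((Λ₂ ⟨0, hd⟩ ⟨0, hd⟩ - Λ₁ ⟨0, hd⟩ ⟨0, hd⟩) / Λ₁ ⟨0, hd⟩ ⟨0, hd⟩) ≤ 0 := by
  set T : Matrix (Fin d) (Fin d) ℝ := Λ₁ * Λ₂⁻¹ with hT
  haveI : Invertible Λ₂ := Λ₂.invertibleOfIsUnitDet hinv₂
  -- T is lower triangular
  have hB₁ : Λ₁.BlockTriangular (OrderDual.toDual : Fin d → (Fin d)ᵒᵈ) :=
    fun i j h => hlow₁ i j h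
  have hB₂ : Λ₂.BlockTriangular (OrderDual.toDual : Fin d → (Fin d)ᵒᵈ) :=
    fun i j h => hlow₂ i j h
  have hBinv : Λ₂⁻¹.BlockTriangular (OrderDual.toDual : Fin d → (Fin d)ᵒᵈ) :=
    Matrix.blockTriangular_inv_of_blockTriangular hB₂
  have hBT : T.BlockTriangular (OrderDual.toDual : Fin d → (Fin d)ᵒᵈ) := hB₁.mul hBinv
  -- Λ₁ = T * Λ₂
  have hfac : Λ₁ = T * Λ₂ := by
    rw [hT, Matrix.mul_assoc, Matrix.nonsing_inv_mul Λ₂ hinv₂, Matrix.mul_one]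
  -- diagonal entries multiply
  have hdiag : ∀ i : Fin d, Λ₁ i i = T i i * Λ₂ i i := by
    intro i
    have : Λ₁ i i = ∑ j, T i j * Λ₂ j i := by rw [hfac]; rfl
    rw [this, Finset.sum_eq_single i]
    · intro j _ hji
      rcases lt_or_gt_of_ne hji with h | h
      · rw [hlow₂ j i h, mul_zero]
      · rw [hBT h, zero_mul]
    · intro h; exact absurd (Finset.mem_univ i) h
  -- each diagonal entry of T is at most 1 in absolute value
  have hTdiag : ∀ i : Fin d, |T i i| ≤ 1 := by
    intro i
    set e : EuclideanSpace ℝ (Fin d) := EuclideanSpace.single i (1 : ℝ)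
    have happ : Matrix.toEuclideanCLM (𝕜 := ℝ) T e =
        (WithLp.equiv 2 (Fin d → ℝ)).symm (Matrix.toLin' T (Pi.single i 1)) := by
      rw [show e = (WithLp.equiv 2 (Fin d → ℝ)).symm (Pi.single i 1) from rfl]
      exact Matrix.toEuclideanCLM_toLp T _
    have hcoord : (Matrix.toEuclideanCLM (𝕜 := ℝ) T e) i = T i i := by
      rw [happ]
      show (Matrix.toLin' T (Pi.single i 1)) i = T i i
      simp [Matrix.toLin'_apply, Matrix.mulVec_single]
    have h1 : |T i i| ≤ ‖Matrix.toEuclideanCLM (𝕜 := ℝ) T e‖ := by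
      rw [← hcoord]
      have := abs_real_inner_le_norm e (Matrix.toEuclideanCLM (𝕜 := ℝ) T e)
      rwa [EuclideanSpace.inner_single_left, EuclideanSpace.norm_single, norm_one, one_mul,
        RCLike.conj_to_real, one_mul] at this
    have h2 : ‖Matrix.toEuclideanCLM (𝕜 := ℝ) T e‖ ≤ 1 := by
      calc ‖Matrix.toEuclideanCLM (𝕜 := ℝ) T e‖
          ≤ ‖Matrix.toEuclideanCLM (𝕜 := ℝ) T‖ * ‖e‖ :=
            (Matrix.toEuclideanCLM (𝕜 := ℝ) T).le_opNorm e
        _ ≤ 1 := by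
            rw [show ‖e‖ = 1 by simp [e], mul_one]; exact hcontr
    exact h1.trans h2
  have hmain : ∀ i : Fin d, |Λ₁ i i| ≤ |Λ₂ i i| := by
    intro i
    rw [hdiag i, abs_mul]
    calc |T i i| * |Λ₂ i i| ≤ 1 * |Λ₂ i i| :=
          mul_le_mul_of_nonneg_right (hTdiag i) (abs_nonneg _)
      _ = |Λ₂ i i| := one_mul _
  refine ⟨hmain, fun i _ => ?_⟩
  apply div_nonpos_of_nonpos_of_nonneg
  · exact neg_nonpos_of_nonneg (div_nonneg (by linarith [hmain i]) (abs_nonneg _))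
  · exact div_nonneg (by linarith) hpos.le
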